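/- Let f : I → ℝ be strictly increasing and n ∈ ℕ. Then A_{f₋}^{[n]} is subassociative: for all k ∈ {1,…,n−1} and x ∈ Iⁿ, A_{f₋}^{[n]}(x) ≥ A_{f₋}^{[n]}(y,…,y,x_{k+1},…,xₙ) where y := A_{f₋}^{[k]}(x₁,…,x_k). Dually, A_{f₊}^{[n]} is superassociative. -/

import Mathlib

open Set Filter Topology

/-- `finv` is the generalized inverse of the strictly increasing function `f : I → ℝ`:
an increasing continuous left inverse of `f` mapping `conv (f '' I)` into `I`. -/
def IsGenInv (I : Set ℝ) (f finv : ℝ → ℝ) : Prop :=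
  MonotoneOn finv (convexHull ℝ (f '' I)) ∧
  ContinuousOn finv (convexHull ℝ (f '' I)) ∧
  Set.MapsTo finv (convexHull ℝ (f '' I)) I ∧
  ∀ x ∈ I, finv (f x) = x

/-- The `n`-variable generalized quasiarithmetic mean `A_f^{[n]}` generated by `f`,
where `finv` is the generalized inverse of `f`. -/
noncomputable def qam (finv f : ℝ → ℝ) (n : ℕ) (x : Fin n → ℝ) : ℝ :=
  finv ((∑ i, f (x i)) / n)


lemma aux_fm_mem (I : Set ℝ) (hIo : IsOpen I) (f fm : ℝ → ℝ) (hf : StrictMonoOn f I)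
    (hfm : ∀ x ∈ I, Tendsto f (𝓝[<] x) (𝓝 (fm x))) {x : ℝ} (hx : x ∈ I) :
    fm x ∈ convexHull ℝ (f '' I) := by
  obtain ⟨ε, hε, hball⟩ := Metric.isOpen_iff.1 hIo x hx
  rw [Real.ball_eq_Ioo] at hball
  obtain ⟨t, htI, htx, hts⟩ : ∃ t, t ∈ I ∧ t < x ∧ x - ε < t :=
    ⟨x - ε/2, hball ⟨by linarith, by linarith⟩, by linarith, by linarith⟩
  have hIoo : Ioo t x ∈ 𝓝[<] x := Ioo_mem_nhdsLT_of_mem ⟨htx, le_refl x⟩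
  have hsI : ∀ s ∈ Ioo t x, s ∈ I := fun s hs => hball ⟨by linarith [hs.1], by linarith [hs.2]⟩
  have h1 : f t ≤ fm x := ge_of_tendsto (hfm x hx)
    (Filter.mem_of_superset hIoo fun s hs => hf.monotoneOn htI (hsI s hs) hs.1.le)
  have h2 : fm x ≤ f x := le_of_tendsto (hfm x hx)
    (Filter.mem_of_superset hIoo fun s hs => (hf.monotoneOn (hsI s hs) hx hs.2.le))
  exact (convex_convexHull ℝ (f '' I)).ordConnected.out
    (subset_convexHull ℝ _ ⟨t, htI, rfl⟩) (subset_convexHull ℝ _ ⟨x, hx, rfl⟩) ⟨h1, h2⟩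

lemma aux_fp_mem (I : Set ℝ) (hIo : IsOpen I) (f fp : ℝ → ℝ) (hf : StrictMonoOn f I)
    (hfp : ∀ x ∈ I, Tendsto f (𝓝[>] x) (𝓝 (fp x))) {x : ℝ} (hx : x ∈ I) :
    fp x ∈ convexHull ℝ (f '' I) := by
  obtain ⟨ε, hε, hball⟩ := Metric.isOpen_iff.1 hIo x hx
  rw [Real.ball_eq_Ioo] at hball
  obtain ⟨t, htI, htx, hts⟩ : ∃ t, t ∈ I ∧ x < t ∧ t < x + ε :=
    ⟨x + ε/2, hball ⟨by linarith, by linarith⟩, by linarith, by linarith⟩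
  have hIoo : Ioo x t ∈ 𝓝[>] x := Ioo_mem_nhdsGT_of_mem ⟨le_refl x, htx⟩
  have hsI : ∀ s ∈ Ioo x t, s ∈ I := fun s hs => hball ⟨by linarith [hs.1], by linarith [hs.2]⟩
  have h1 : fp x ≤ f t := le_of_tendsto (hfp x hx)
    (Filter.mem_of_superset hIoo fun s hs => hf.monotoneOn (hsI s hs) htI hs.2.le)
  have h2 : f x ≤ fp x := ge_of_tendsto (hfp x hx)
    (Filter.mem_of_superset hIoo fun s hs => (hf.monotoneOn hx (hsI s hs) hs.1.le))
  exact (convex_convexHull ℝ (f '' I)).ordConnected.out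
    (subset_convexHull ℝ _ ⟨x, hx, rfl⟩) (subset_convexHull ℝ _ ⟨t, htI, rfl⟩) ⟨h2, h1⟩

lemma aux_fm_le (I : Set ℝ) (hIo : IsOpen I) (f fm finv : ℝ → ℝ)
    (hfm : ∀ x ∈ I, Tendsto f (𝓝[<] x) (𝓝 (fm x)))
    (hmono : MonotoneOn finv (convexHull ℝ (f '' I)))
    (hmaps : Set.MapsTo finv (convexHull ℝ (f '' I)) I)
    (hli : ∀ x ∈ I, finv (f x) = x)
    {m : ℝ} (hm : m ∈ convexHull ℝ (f '' I)) : fm (finv m) ≤ m := by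
  set y := finv m with hy
  have hyI : y ∈ I := hmaps hm
  obtain ⟨ε, hε, hball⟩ := Metric.isOpen_iff.1 hIo y hyI
  rw [Real.ball_eq_Ioo] at hball
  have htx : y - ε/2 < y := by linarith
  have hIoo : Ioo (y - ε/2) y ∈ 𝓝[<] y := Ioo_mem_nhdsLT_of_mem ⟨htx, le_refl y⟩
  refine le_of_tendsto (hfm y hyI) (Filter.mem_of_superset hIoo fun s hs => ?_)
  have hsI : s ∈ I := hball ⟨by linarith [hs.1], by linarith [hs.2]⟩
  show f s ≤ m
  by_contra h
  push_neg at h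
  have : finv m ≤ finv (f s) :=
    hmono hm (subset_convexHull ℝ _ ⟨s, hsI, rfl⟩) h.le
  rw [hli s hsI] at this
  exact absurd (this.trans_lt hs.2) (lt_irrefl _)

lemma aux_fp_ge (I : Set ℝ) (hIo : IsOpen I) (f fp finv : ℝ → ℝ)
    (hfp : ∀ x ∈ I, Tendsto f (𝓝[>] x) (𝓝 (fp x)))
    (hmono : MonotoneOn finv (convexHull ℝ (f '' I)))
    (hmaps : Set.MapsTo finv (convexHull ℝ (f '' I)) I)
    (hli : ∀ x ∈ I, finv (f x) = x)
    {m : ℝ} (hm : m ∈ convexHull ℝ (f '' I)) : m ≤ fp (finv m) := by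
  set y := finv m with hy
  have hyI : y ∈ I := hmaps hm
  obtain ⟨ε, hε, hball⟩ := Metric.isOpen_iff.1 hIo y hyI
  rw [Real.ball_eq_Ioo] at hball
  have htx : y < y + ε/2 := by linarith
  have hIoo : Ioo y (y + ε/2) ∈ 𝓝[>] y := Ioo_mem_nhdsGT_of_mem ⟨le_refl y, htx⟩
  refine ge_of_tendsto (hfp y hyI) (Filter.mem_of_superset hIoo fun s hs => ?_)
  have hsI : s ∈ I := hball ⟨by linarith [hs.1], by linarith [hs.2]⟩
  show m ≤ f s
  by_contra h
  push_neg at h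
  have : finv (f s) ≤ finv m :=
    hmono (subset_convexHull ℝ _ ⟨s, hsI, rfl⟩) hm h.le
  rw [hli s hsI] at this
  exact absurd (hs.1.trans_le this) (lt_irrefl _)

lemma aux_avg_mem {n : ℕ} (hn : 0 < n) {s : Set ℝ} (hs : Convex ℝ s)
    (v : Fin n → ℝ) (hv : ∀ i, v i ∈ s) : (∑ i, v i) / n ∈ s := by
  have hn' : (n : ℝ) ≠ 0 := Nat.cast_ne_zero.2 hn.ne'
  have := hs.sum_mem (t := Finset.univ) (w := fun _ : Fin n => (n : ℝ)⁻¹)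
    (fun i _ => by positivity)
    (by simp [Finset.sum_const, Finset.card_univ, nsmul_eq_mul, mul_inv_cancel₀ hn'])
    (fun i _ => hv i)
  have heq : ∑ i : Fin n, (n : ℝ)⁻¹ • v i = (∑ i, v i) / n := by
    simp only [smul_eq_mul, inv_mul_eq_div]
    rw [Finset.sum_div]
  rwa [heq] at this

lemma aux_main_le (I : Set ℝ) (f g finv : ℝ → ℝ)
    (hgmem : ∀ x ∈ I, g x ∈ convexHull ℝ (f '' I))
    (hkey : ∀ m ∈ convexHull ℝ (f '' I), g (finv m) ≤ m)
    (hmono : MonotoneOn finv (convexHull ℝ (f '' I)))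
    (hmaps : Set.MapsTo finv (convexHull ℝ (f '' I)) I)
    (n k : ℕ) (hk : 0 < k) (hkn : k < n) (x : Fin n → ℝ) (hx : ∀ i, x i ∈ I) :
    finv ((∑ i : Fin n, g (if (i : ℕ) < k then
        finv ((∑ j : Fin k, g (x ⟨j.1, j.2.trans hkn⟩)) / k) else x i)) / n)
      ≤ finv ((∑ i : Fin n, g (x i)) / n) := by
  have hn : 0 < n := hk.trans hkn
  have hn' : (0:ℝ) < n := by exact_mod_cast hn
  have hk' : (0:ℝ) < k := by exact_mod_cast hk
  have hC : Convex ℝ (convexHull ℝ (f '' I)) := convex_convexHull ℝ _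
  set C := convexHull ℝ (f '' I) with hCdef
  set m := (∑ j : Fin k, g (x ⟨j.1, j.2.trans hkn⟩)) / (k:ℝ) with hm
  set y := finv m with hy
  have hmC : m ∈ C := aux_avg_mem hk hC _ (fun j => hgmem _ (hx _))
  have hyI : y ∈ I := hmaps hmC
  have hgy : g y ≤ m := hkey m hmC
  set G : ℕ → ℝ := fun i => if h : i < n then g (x ⟨i, h⟩) else 0 with hG
  have h3 : ∑ j : Fin k, g (x ⟨j.1, j.2.trans hkn⟩) = ∑ i ∈ Finset.range k, G i := by
    rw [← Fin.sum_univ_eq_sum_range]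
    exact Finset.sum_congr rfl fun j _ => by simp only [hG]; rw [dif_pos (j.2.trans hkn)]
  have h2 : ∑ i : Fin n, g (x i) = ∑ i ∈ Finset.range n, G i := by
    rw [← Fin.sum_univ_eq_sum_range]
    exact Finset.sum_congr rfl fun i _ => by simp only [hG]; rw [dif_pos i.2]
  have h1 : ∑ i : Fin n, g (if (i : ℕ) < k then y else x i)
      = ∑ i ∈ Finset.range n, (if i < k then g y else G i) := by
    rw [← Fin.sum_univ_eq_sum_range]
    refine Finset.sum_congr rfl fun i _ => ?_
    by_cases hik : (i : ℕ) < k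
    · rw [if_pos hik, if_pos hik]
    · rw [if_neg hik, if_neg hik]; simp only [hG]; rw [dif_pos i.2]
  have hsplit : ∀ F : ℕ → ℝ, ∑ i ∈ Finset.range n, F i
      = ∑ i ∈ Finset.range k, F i + ∑ i ∈ Finset.Ico k n, F i := by
    intro F
    rw [Finset.range_eq_Ico]
    rw [← Finset.sum_Ico_consecutive F (Nat.zero_le k) hkn.le]
    rw [Finset.range_eq_Ico]
  have hkm : (k:ℝ) * m = ∑ i ∈ Finset.range k, G i := by
    rw [hm, h3]; field_simp
  have hle : ∑ i : Fin n, g (if (i : ℕ) < k then y else x i) ≤ ∑ i : Fin n, g (x i) := by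
    rw [h1, h2, hsplit (fun i => if i < k then g y else G i), hsplit G]
    have e1 : ∑ i ∈ Finset.range k, (if i < k then g y else G i) = (k:ℝ) * g y := by
      rw [Finset.sum_congr rfl fun i hi => if_pos (Finset.mem_range.1 hi),
        Finset.sum_const, Finset.card_range, nsmul_eq_mul]
    have e2 : ∑ i ∈ Finset.Ico k n, (if i < k then g y else G i)
        = ∑ i ∈ Finset.Ico k n, G i :=
      Finset.sum_congr rfl fun i hi => if_neg (Nat.not_lt.2 (Finset.mem_Ico.1 hi).1)
    rw [e1, e2]
    have : (k:ℝ) * g y ≤ (k:ℝ) * m := by nlinarith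
    rw [hkm] at this
    linarith
  have memS' : (∑ i : Fin n, g (if (i : ℕ) < k then y else x i)) / (n:ℝ) ∈ C := by
    refine aux_avg_mem hn hC _ (fun i => ?_)
    by_cases hik : (i : ℕ) < k
    · rw [if_pos hik]; exact hgmem y hyI
    · rw [if_neg hik]; exact hgmem _ (hx i)
  have memS : (∑ i : Fin n, g (x i)) / (n:ℝ) ∈ C :=
    aux_avg_mem hn hC _ (fun i => hgmem _ (hx i))
  exact hmono memS' memS (by gcongr)

lemma aux_main_ge (I : Set ℝ) (f g finv : ℝ → ℝ)
    (hgmem : ∀ x ∈ I, g x ∈ convexHull ℝ (f '' I))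
    (hkey : ∀ m ∈ convexHull ℝ (f '' I), m ≤ g (finv m))
    (hmono : MonotoneOn finv (convexHull ℝ (f '' I)))
    (hmaps : Set.MapsTo finv (convexHull ℝ (f '' I)) I)
    (n k : ℕ) (hk : 0 < k) (hkn : k < n) (x : Fin n → ℝ) (hx : ∀ i, x i ∈ I) :
    finv ((∑ i : Fin n, g (x i)) / n)
      ≤ finv ((∑ i : Fin n, g (if (i : ℕ) < k then
        finv ((∑ j : Fin k, g (x ⟨j.1, j.2.trans hkn⟩)) / k) else x i)) / n) := by
  have hn : 0 < n := hk.trans hkn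
  have hn' : (0:ℝ) < n := by exact_mod_cast hn
  have hk' : (0:ℝ) < k := by exact_mod_cast hk
  have hC : Convex ℝ (convexHull ℝ (f '' I)) := convex_convexHull ℝ _
  set C := convexHull ℝ (f '' I) with hCdef
  set m := (∑ j : Fin k, g (x ⟨j.1, j.2.trans hkn⟩)) / (k:ℝ) with hm
  set y := finv m with hy
  have hmC : m ∈ C := aux_avg_mem hk hC _ (fun j => hgmem _ (hx _))
  have hyI : y ∈ I := hmaps hmC
  have hgy : m ≤ g y := hkey m hmC
  set G : ℕ → ℝ := fun i => if h : i < n then g (x ⟨i, h⟩) else 0 with hG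
  have h3 : ∑ j : Fin k, g (x ⟨j.1, j.2.trans hkn⟩) = ∑ i ∈ Finset.range k, G i := by
    rw [← Fin.sum_univ_eq_sum_range]
    exact Finset.sum_congr rfl fun j _ => by simp only [hG]; rw [dif_pos (j.2.trans hkn)]
  have h2 : ∑ i : Fin n, g (x i) = ∑ i ∈ Finset.range n, G i := by
    rw [← Fin.sum_univ_eq_sum_range]
    exact Finset.sum_congr rfl fun i _ => by simp only [hG]; rw [dif_pos i.2]
  have h1 : ∑ i : Fin n, g (if (i : ℕ) < k then y else x i)
      = ∑ i ∈ Finset.range n, (if i < k then g y else G i) := by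
    rw [← Fin.sum_univ_eq_sum_range]
    refine Finset.sum_congr rfl fun i _ => ?_
    by_cases hik : (i : ℕ) < k
    · rw [if_pos hik, if_pos hik]
    · rw [if_neg hik, if_neg hik]; simp only [hG]; rw [dif_pos i.2]
  have hsplit : ∀ F : ℕ → ℝ, ∑ i ∈ Finset.range n, F i
      = ∑ i ∈ Finset.range k, F i + ∑ i ∈ Finset.Ico k n, F i := by
    intro F
    rw [Finset.range_eq_Ico]
    rw [← Finset.sum_Ico_consecutive F (Nat.zero_le k) hkn.le]
    rw [Finset.range_eq_Ico]
  have hkm : (k:ℝ) * m = ∑ i ∈ Finset.range k, G i := by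
    rw [hm, h3]; field_simp
  have hle : ∑ i : Fin n, g (x i) ≤ ∑ i : Fin n, g (if (i : ℕ) < k then y else x i) := by
    rw [h1, h2, hsplit (fun i => if i < k then g y else G i), hsplit G]
    have e1 : ∑ i ∈ Finset.range k, (if i < k then g y else G i) = (k:ℝ) * g y := by
      rw [Finset.sum_congr rfl fun i hi => if_pos (Finset.mem_range.1 hi),
        Finset.sum_const, Finset.card_range, nsmul_eq_mul]
    have e2 : ∑ i ∈ Finset.Ico k n, (if i < k then g y else G i)
        = ∑ i ∈ Finset.Ico k n, G i :=
      Finset.sum_congr rfl fun i hi => if_neg (Nat.not_lt.2 (Finset.mem_Ico.1 hi).1)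
    rw [e1, e2]
    have : (k:ℝ) * m ≤ (k:ℝ) * g y := by nlinarith
    rw [hkm] at this
    linarith
  have memS' : (∑ i : Fin n, g (if (i : ℕ) < k then y else x i)) / (n:ℝ) ∈ C := by
    refine aux_avg_mem hn hC _ (fun i => ?_)
    by_cases hik : (i : ℕ) < k
    · rw [if_pos hik]; exact hgmem y hyI
    · rw [if_neg hik]; exact hgmem _ (hx i)
  have memS : (∑ i : Fin n, g (x i)) / (n:ℝ) ∈ C :=
    aux_avg_mem hn hC _ (fun i => hgmem _ (hx i))
  exact hmono memS memS' (by gcongr)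

theorem stmt13 (I : Set ℝ) (hIo : IsOpen I) (hIc : I.OrdConnected) (hne : I.Nonempty)
    (f fm fp finv : ℝ → ℝ) (hf : StrictMonoOn f I)
    (hfm : ∀ x ∈ I, Tendsto f (𝓝[<] x) (𝓝 (fm x)))
    (hfp : ∀ x ∈ I, Tendsto f (𝓝[>] x) (𝓝 (fp x)))
    (hinv : IsGenInv I f finv)
    (n k : ℕ) (hk : 0 < k) (hkn : k < n) (x : Fin n → ℝ) (hx : ∀ i, x i ∈ I) :
    qam finv fm n
        (fun i => if (i : ℕ) < k then qam finv fm k (fun j => x ⟨j.1, j.2.trans hkn⟩)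
          else x i)
      ≤ qam finv fm n x ∧
    qam finv fp n x ≤
      qam finv fp n
        (fun i => if (i : ℕ) < k then qam finv fp k (fun j => x ⟨j.1, j.2.trans hkn⟩)
          else x i) := by
  obtain ⟨hmono, hcont, hmaps, hli⟩ := hinv
  constructor
  · simp only [qam]
    exact aux_main_le I f fm finv (fun z hz => aux_fm_mem I hIo f fm hf hfm hz)
      (fun m hm => aux_fm_le I hIo f fm finv hfm hmono hmaps hli hm)
      hmono hmaps n k hk hkn x hx
  · simp only [qam]
    exact aux_main_ge I f fp finv (fun z hz => aux_fp_mem I hIo f fp hf hfp hz)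
      (fun m hm => aux_fp_ge I hIo f fp finv hfp hmono hmaps hli hm)
      hmono hmaps n k hk hkn x hx
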